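/- Suppose h is a generalised h-vector, i.e. h(Δ)=Σ_{δ⊆Δ}(x−y)^{dim δ} g(L_δ) with g linear, g(∅)=1 and g(CL)=y·g(L). Then for every convex polytope Δ: h(IΔ)=(x+y)·h(Δ). -/
import Mathlib


open MvPolynomial

noncomputable section

abbrev R2 : Type := MvPolynomial (Fin 2) ℚ

def px : R2 := X 0
def py : R2 := X 1

/-- for a generalised h-vector
`h(Δ) = Σ_{δ ⊆ Δ} (x-y)^(dim δ) g(L_δ)` (with `g` linear, `g(∅)=1`,
`g(CL)=y·g(L)`) one has `h(IΔ) = (x+y)·h(Δ)`.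
Faces of the cylinder `IΔ` are `δ×{0}`, `δ×{1}` (same dimension, link `C L_δ`)
and `δ×[0,1]` (dimension one more, link `L_δ`), for `δ` a face of `Δ`
(including `Δ` itself, whose link is `∅`, with flag vector `fempty`). -/
theorem stmt1 {V P : Type} [AddCommGroup V] [Module ℚ V]
    (Cop : V →ₗ[ℚ] V) (fempty : V)
    (F : P → Type) [∀ Δ, Fintype (F Δ)]
    (fdim : (Δ : P) → F Δ → ℕ) (link : (Δ : P) → F Δ → V)
    (g : V →ₗ[ℚ] R2)
    (hg0 : g fempty = 1) (hgC : ∀ v : V, g (Cop v) = py * g v)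
    (cyl : P → P)
    (e : (Δ : P) → F (cyl Δ) ≃ (F Δ ⊕ F Δ ⊕ F Δ))
    (hdim : ∀ (Δ : P) (δ : F (cyl Δ)),
      fdim (cyl Δ) δ = Sum.elim (fun δ₁ => fdim Δ δ₁)
        (Sum.elim (fun δ₁ => fdim Δ δ₁) (fun δ₁ => fdim Δ δ₁ + 1)) (e Δ δ))
    (hlink : ∀ (Δ : P) (δ : F (cyl Δ)),
      link (cyl Δ) δ = Sum.elim (fun δ₁ => Cop (link Δ δ₁))
        (Sum.elim (fun δ₁ => Cop (link Δ δ₁)) (fun δ₁ => link Δ δ₁)) (e Δ δ)) :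
    ∀ Δ : P,
      (∑ δ : F (cyl Δ), (px - py) ^ fdim (cyl Δ) δ * g (link (cyl Δ) δ))
        = (px + py) * ∑ δ : F Δ, (px - py) ^ fdim Δ δ * g (link Δ δ) := by
  intro Δ
  rw [Fintype.sum_equiv (e Δ)
    (fun δ => (px - py) ^ fdim (cyl Δ) δ * g (link (cyl Δ) δ))
    (fun s => Sum.elim (fun δ₁ => (px - py) ^ fdim Δ δ₁ * (py * g (link Δ δ₁)))
      (Sum.elim (fun δ₁ => (px - py) ^ fdim Δ δ₁ * (py * g (link Δ δ₁)))
        (fun δ₁ => (px - py) ^ (fdim Δ δ₁ + 1) * g (link Δ δ₁))) s)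
    (fun δ => by
      simp only [hdim Δ δ, hlink Δ δ]
      cases e Δ δ with
      | inl a => simp [hgC]
      | inr b => cases b with
        | inl a => simp [hgC]
        | inr a => simp)]
  rw [Fintype.sum_sum_type, Fintype.sum_sum_type, Finset.mul_sum]
  rw [← Finset.sum_add_distrib, ← Finset.sum_add_distrib]
  apply Finset.sum_congr rfl
  intro δ _
  simp only [Sum.elim_inl, Sum.elim_inr]
  ring
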